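/- For the complete graph K_n and every integer k with 2 ≤ k ≤ n − 1, the k-fair coalition number satisfies C_{kf}(K_n) = n − k + 2. -/

import Mathlib

/-- `S` is a `k`-fair dominating set of `G`: every vertex outside `S` has exactly `k`
neighbors in `S`. -/
def SimpleGraph.KFairDom {V : Type*} (G : SimpleGraph V) (k : ℕ) (S : Set V) : Prop :=
  ∀ v ∉ S, (G.neighborSet v ∩ S).ncard = k

/-- Disjoint sets `A`, `B` form a `k`-fair coalition: neither is a `k`-fair dominating
set, but their union is. -/
def SimpleGraph.KFairCoalition {V : Type*} (G : SimpleGraph V) (k : ℕ) (A B : Set V) : Prop :=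
  Disjoint A B ∧ ¬ G.KFairDom k A ∧ ¬ G.KFairDom k B ∧ G.KFairDom k (A ∪ B)

/-- `P` is a `k`-fair coalition partition of `G`: a partition of the vertex set into
nonempty blocks, each of which is either a `k`-fair dominating set with exactly `k`
vertices or forms a `k`-fair coalition with another block. -/
def SimpleGraph.IsKFairCoalPartition {V : Type*} (G : SimpleGraph V) (k : ℕ)
    (P : Set (Set V)) : Prop :=
  (∀ A ∈ P, A.Nonempty) ∧ ⋃₀ P = Set.univ ∧ P.PairwiseDisjoint id ∧
  ∀ A ∈ P, (G.KFairDom k A ∧ A.ncard = k) ∨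
    (¬ G.KFairDom k A ∧ ∃ B ∈ P, B ≠ A ∧ G.KFairCoalition k A B)

/-- The `k`-fair coalition number `C_{kf}(G)`: the maximum size of a `k`-fair coalition
partition of `G`. -/
noncomputable def SimpleGraph.kFairCoalNum {V : Type*} (G : SimpleGraph V) (k : ℕ) : ℕ :=
  sSup {n | ∃ P : Set (Set V), G.IsKFairCoalPartition k P ∧ P.ncard = n}

/-- The `k`-fair domatic number `d_{kf}(G)`: the maximum size of a partition of the
vertex set into `k`-fair dominating sets. -/
noncomputable def SimpleGraph.kFairDomaticNum {V : Type*} (G : SimpleGraph V) (k : ℕ) : ℕ :=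
  sSup {n | ∃ P : Set (Set V), (∀ A ∈ P, A.Nonempty) ∧ ⋃₀ P = Set.univ ∧
    P.PairwiseDisjoint id ∧ (∀ A ∈ P, G.KFairDom k A) ∧ P.ncard = n}



namespace KFairAux

lemma nbhd_inter {n : ℕ} {v : Fin n} {S : Set (Fin n)} (hv : v ∉ S) :
    (SimpleGraph.completeGraph (Fin n)).neighborSet v ∩ S = S := by
  ext w
  simp only [Set.mem_inter_iff, SimpleGraph.mem_neighborSet, SimpleGraph.completeGraph, SimpleGraph.top_adj,
    and_iff_right_iff_imp]
  rintro hw rfl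
  exact hv hw

lemma kfd_of_ncard {n k : ℕ} {S : Set (Fin n)} (h : S.ncard = k) :
    (SimpleGraph.completeGraph (Fin n)).KFairDom k S := by
  intro v hv
  rw [nbhd_inter hv, h]

lemma ne_univ {n : ℕ} {S : Set (Fin n)} (h : S.ncard ≠ n) : S ≠ Set.univ := by
  intro h'
  apply h
  rw [h', Set.ncard_univ, Nat.card_eq_fintype_card, Fintype.card_fin]

lemma not_kfd {n k : ℕ} {S : Set (Fin n)} (h1 : S.ncard ≠ k) (h2 : S ≠ Set.univ) :
    ¬ (SimpleGraph.completeGraph (Fin n)).KFairDom k S := by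
  intro h
  obtain ⟨v, hv⟩ := (Set.ne_univ_iff_exists_notMem S).1 h2
  have := h v hv
  rw [nbhd_inter hv] at this
  exact h1 this

lemma ncard_le_of_disjoint {α : Type*} [Finite α] {P : Set (Set α)} {T : Set α}
    (hP : P.PairwiseDisjoint id) (hne : ∀ A ∈ P, A.Nonempty) (hsub : ∀ A ∈ P, A ⊆ T) :
    P.ncard ≤ T.ncard := by
  rcases P.eq_empty_or_nonempty with rfl | ⟨A0, hA0⟩
  · simp
  have : Nonempty α := ⟨(hne A0 hA0).choose⟩
  classical
  set f : Set α → α := fun S => if h : S.Nonempty then h.choose else Classical.arbitrary α with hf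
  apply Set.ncard_le_ncard_of_injOn f
  · intro A hA
    have hA' := hne A hA
    simp only [hf, dif_pos hA']
    exact hsub A hA hA'.choose_spec
  · intro A hA B hB hfab
    by_contra hne'
    have h1 : f A ∈ A := by simp only [hf, dif_pos (hne A hA)]; exact (hne A hA).choose_spec
    have h2 : f B ∈ B := by simp only [hf, dif_pos (hne B hB)]; exact (hne B hB).choose_spec
    exact Set.disjoint_left.1 (hP hA hB hne') h1 (hfab ▸ h2)

end KFairAux

namespace KFairAux

lemma upper {n k : ℕ} (hk : 2 ≤ k) (hkn : k + 1 ≤ n) {P : Set (Set (Fin n))}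
    (hP : (SimpleGraph.completeGraph (Fin n)).IsKFairCoalPartition k P) : P.ncard ≤ n - k + 2 := by
  obtain ⟨hne, hcov, hdis, hblk⟩ := hP
  by_cases hm : P.ncard ≤ 2
  · omega
  push_neg at hm
  obtain ⟨A, B, hA, hB, hAB, hcard⟩ :
      ∃ A B, A ∈ P ∧ B ∈ P ∧ A ≠ B ∧ k ≤ (A ∪ B).ncard := by
    by_cases hall : ∀ A ∈ P, A.ncard = k
    · obtain ⟨A, B, hA, hB, hAB⟩ := (Set.one_lt_ncard_iff P.toFinite).1 (by omega)
      refine ⟨A, B, hA, hB, hAB, ?_⟩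
      have hd : Disjoint A B := hdis hA hB hAB
      rw [Set.ncard_union_eq hd (A.toFinite) (B.toFinite), hall A hA, hall B hB]
      omega
    · push_neg at hall
      obtain ⟨A, hA, hAk⟩ := hall
      rcases hblk A hA with ⟨_, h⟩ | ⟨_, B, hB, hBA, hdisj, _, _, hu⟩
      · exact absurd h hAk
      obtain ⟨C, hC, hCA, hCB⟩ : ∃ C ∈ P, C ≠ A ∧ C ≠ B := by
        by_contra hcon
        push_neg at hcon
        have hsub : P ⊆ {A, B} := by
          intro C hC
          rcases Classical.em (C = A) with rfl | h'
          · exact Set.mem_insert _ _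
          · exact Set.mem_insert_of_mem _ (hcon C hC h')
        have := Set.ncard_le_ncard hsub (Set.toFinite _)
        have h2 : ({A, B} : Set (Set (Fin n))).ncard ≤ 2 := by
          apply le_trans (Set.ncard_insert_le _ _)
          simp
        omega
      obtain ⟨v, hv⟩ := hne C hC
      have hvAB : v ∉ A ∪ B := by
        rintro (h | h)
        · exact Set.disjoint_left.1 (hdis hC hA hCA) hv h
        · exact Set.disjoint_left.1 (hdis hC hB hCB) hv h
      have := hu v hvAB
      rw [nbhd_inter hvAB] at this
      exact ⟨A, B, hA, hB, Ne.symm hBA, le_of_eq this.symm⟩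
  -- count the rest of the blocks inside (A ∪ B)ᶜ
  have hsub : ∀ C ∈ P \ {A, B}, C ⊆ (A ∪ B)ᶜ := by
    rintro C ⟨hC, hC'⟩ x hx
    simp only [Set.mem_insert_iff, Set.mem_singleton_iff, not_or] at hC'
    rintro (h | h)
    · exact Set.disjoint_left.1 (hdis hC hA hC'.1) hx h
    · exact Set.disjoint_left.1 (hdis hC hB hC'.2) hx h
  have hle : (P \ {A, B}).ncard ≤ ((A ∪ B)ᶜ).ncard :=
    ncard_le_of_disjoint (hdis.subset Set.diff_subset)
      (fun C hC => hne C hC.1) hsub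
  have hdiff : (P \ {A, B}).ncard = P.ncard - 2 := by
    have hst : ({A, B} : Set (Set (Fin n))) ⊆ P := by
      simp [Set.insert_subset_iff, hA, hB]
    rw [Set.ncard_diff hst (Set.toFinite _), Set.ncard_pair hAB]
  have hcompl : (A ∪ B).ncard + ((A ∪ B)ᶜ).ncard = n := by
    rw [Set.ncard_add_ncard_compl, Nat.card_eq_fintype_card, Fintype.card_fin]
  omega

end KFairAux

namespace KFairAux

lemma construct (n k : ℕ) (hk : 2 ≤ k) (hkn : k + 1 ≤ n) :
    ∃ P : Set (Set (Fin n)), (SimpleGraph.completeGraph (Fin n)).IsKFairCoalPartition k P ∧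
      P.ncard = n - k + 2 := by
  classical
  have h0n : 0 < n := by omega
  have h1n : 1 < n := by omega
  set A : Set (Fin n) := {x | (x : ℕ) = 0} with hAdef
  set B : Set (Fin n) := {x | 0 < (x : ℕ) ∧ (x : ℕ) < k} with hBdef
  set Q : Set (Set (Fin n)) := (fun x => ({x} : Set (Fin n))) '' {x | k ≤ (x : ℕ)} with hQdef
  -- cardinalities
  have himB : Fin.val '' B = Set.Ioo 0 k := by
    ext i
    constructor
    · rintro ⟨x, hx, rfl⟩; exact hx
    · rintro ⟨h1, h2⟩; exact ⟨⟨i, by omega⟩, ⟨h1, h2⟩, rfl⟩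
  have hcardB : B.ncard = k - 1 := by
    rw [← Set.ncard_image_of_injective B Fin.val_injective, himB, ← Finset.coe_Ioo,
      Set.ncard_coe_finset, Nat.card_Ioo]
    omega
  have hAeq : A = {(⟨0, h0n⟩ : Fin n)} := by
    ext x; simp [hAdef, Fin.ext_iff]
  have hcardA : A.ncard = 1 := by rw [hAeq]; exact Set.ncard_singleton _
  have hAB : A ∪ B = {x : Fin n | (x : ℕ) < k} := by
    ext x; simp only [hAdef, hBdef, Set.mem_union, Set.mem_setOf_eq]; omega
  have himAB : Fin.val '' (A ∪ B) = Set.Iio k := by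
    rw [hAB]; ext i
    constructor
    · rintro ⟨x, hx, rfl⟩; exact hx
    · intro h
      rw [Set.mem_Iio] at h
      exact ⟨⟨i, by omega⟩, h, rfl⟩
  have hcardAB : (A ∪ B).ncard = k := by
    rw [← Set.ncard_image_of_injective (A ∪ B) Fin.val_injective, himAB, ← Finset.coe_Iio,
      Set.ncard_coe_finset, Nat.card_Iio]
  -- elements
  have h1B : (⟨1, h1n⟩ : Fin n) ∈ B := by simp [hBdef]; omega
  have h0A : (⟨0, h0n⟩ : Fin n) ∈ A := by simp [hAdef]
  have h0nB : (⟨0, h0n⟩ : Fin n) ∉ B := by simp [hBdef]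
  have h1nA : (⟨1, h1n⟩ : Fin n) ∉ A := by simp [hAdef]
  have hBneA : B ≠ A := fun h => h1nA (h ▸ h1B)
  -- non-domination facts
  have hnA : ¬ (SimpleGraph.completeGraph (Fin n)).KFairDom k A :=
    not_kfd (by omega) (ne_univ (by omega))
  have hnB : ¬ (SimpleGraph.completeGraph (Fin n)).KFairDom k B :=
    not_kfd (by omega) (ne_univ (by omega))
  have hdAB : Disjoint A B := by
    rw [Set.disjoint_left]; intro a ha hb
    rw [hAdef] at ha; rw [hBdef] at hb
    simp at ha hb; omega
  have hcoalAB : (SimpleGraph.completeGraph (Fin n)).KFairCoalition k A B :=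
    ⟨hdAB, hnA, hnB, kfd_of_ncard hcardAB⟩
  -- singleton blocks
  have hsing : ∀ x : Fin n, k ≤ (x : ℕ) →
      Disjoint ({x} : Set (Fin n)) B ∧ (({x} : Set (Fin n)) ∪ B).ncard = k ∧
      ¬ (SimpleGraph.completeGraph (Fin n)).KFairDom k {x} ∧ B ≠ {x} := by
    intro x hx
    have hxB : x ∉ B := by intro hb; have h2 := hb.2; omega
    have hd : Disjoint ({x} : Set (Fin n)) B := by simp [Set.disjoint_left, hxB]
    have him : Fin.val '' (({x} : Set (Fin n)) ∪ B) = insert (x : ℕ) (Set.Ioo 0 k) := by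
      rw [Set.image_union, himB, Set.image_singleton]
      rw [Set.singleton_union]
    have hc : (({x} : Set (Fin n)) ∪ B).ncard = k := by
      rw [← Set.ncard_image_of_injective _ Fin.val_injective, him,
        Set.ncard_insert_of_notMem (by simp; omega) (Set.toFinite _), ← Finset.coe_Ioo,
        Set.ncard_coe_finset, Nat.card_Ioo]
      omega
    refine ⟨hd, hc, not_kfd (by rw [Set.ncard_singleton]; omega) (ne_univ (by rw [Set.ncard_singleton]; omega)), ?_⟩
    intro h
    have : (⟨1, h1n⟩ : Fin n) ∈ ({x} : Set (Fin n)) := h ▸ h1B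
    simp [Fin.ext_iff] at this
    omega
  refine ⟨insert A (insert B Q), ⟨?_, ?_, ?_, ?_⟩, ?_⟩
  · -- nonempty
    rintro S (rfl | rfl | ⟨x, hx, rfl⟩)
    · exact ⟨_, h0A⟩
    · exact ⟨_, h1B⟩
    · exact ⟨x, rfl⟩
  · -- cover
    apply Set.eq_univ_of_forall
    intro x
    rcases Nat.lt_or_ge (x : ℕ) k with h | h
    · rcases Nat.eq_zero_or_pos (x : ℕ) with h0 | h0
      · exact ⟨A, Set.mem_insert _ _, h0⟩
      · exact ⟨B, Set.mem_insert_of_mem _ (Set.mem_insert _ _), ⟨h0, h⟩⟩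
    · exact ⟨{x}, Set.mem_insert_of_mem _ (Set.mem_insert_of_mem _ ⟨x, h, rfl⟩), rfl⟩
  · -- pairwise disjoint
    have hdA1 : ∀ y : Fin n, k ≤ (y : ℕ) → Disjoint A ({y} : Set (Fin n)) := by
      intro y hy
      rw [Set.disjoint_singleton_right]
      intro h
      have : (y : ℕ) = 0 := h
      omega
    have hdB1 : ∀ y : Fin n, k ≤ (y : ℕ) → Disjoint B ({y} : Set (Fin n)) := by
      intro y hy
      rw [Set.disjoint_singleton_right]
      intro h
      have : (y : ℕ) < k := h.2
      omega
    rintro S hS T hT hST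
    have : Disjoint S T := by
      rcases hS with rfl | rfl | ⟨x, hx, rfl⟩ <;> rcases hT with rfl | rfl | ⟨y, hy, rfl⟩
      · exact absurd rfl hST
      · exact hdAB
      · exact hdA1 y hy
      · exact hdAB.symm
      · exact absurd rfl hST
      · exact hdB1 y hy
      · exact (hdA1 x hx).symm
      · exact (hdB1 x hx).symm
      · refine Set.disjoint_singleton.2 (fun h => hST ?_)
        rw [h]
    exact this
  · -- blocks condition
    rintro S (rfl | rfl | ⟨x, hx, rfl⟩)
    · exact Or.inr ⟨hnA, B, Set.mem_insert_of_mem _ (Set.mem_insert _ _), hBneA, hcoalAB⟩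
    · refine Or.inr ⟨hnB, A, Set.mem_insert _ _, fun h => hBneA h.symm, ?_⟩
      exact ⟨hdAB.symm, hnB, hnA, by rw [Set.union_comm]; exact kfd_of_ncard hcardAB⟩
    · obtain ⟨hd, hc, hns, hBne⟩ := hsing x hx
      exact Or.inr ⟨hns, B, Set.mem_insert_of_mem _ (Set.mem_insert _ _), hBne,
        ⟨hd, hns, hnB, kfd_of_ncard hc⟩⟩
  · -- cardinality
    have hQcard : Q.ncard = n - k := by
      rw [hQdef, Set.ncard_image_of_injective _
        (fun a b h => Set.singleton_eq_singleton_iff.1 h)]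
      rw [← Set.ncard_image_of_injective _ Fin.val_injective]
      have : Fin.val '' {x : Fin n | k ≤ (x : ℕ)} = Set.Ico k n := by
        ext i
        constructor
        · rintro ⟨x, hxk, rfl⟩; exact ⟨hxk, x.isLt⟩
        · rintro ⟨h1, h2⟩; exact ⟨⟨i, h2⟩, h1, rfl⟩
      rw [this, ← Finset.coe_Ico, Set.ncard_coe_finset, Nat.card_Ico]
    have hBQ : B ∉ Q := by
      rintro ⟨x, hx, hxB⟩
      have : (⟨1, h1n⟩ : Fin n) ∈ ({x} : Set (Fin n)) := by
        rw [show ({x} : Set (Fin n)) = B from hxB]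
        exact h1B
      rw [Set.mem_singleton_iff, Fin.ext_iff] at this
      have h1 : (1 : ℕ) = (x : ℕ) := this
      have hx' : k ≤ (x : ℕ) := hx
      omega
    have hAQ : A ∉ insert B Q := by
      rintro (h | ⟨x, hx, hxA⟩)
      · exact hBneA h.symm
      · have : (⟨0, h0n⟩ : Fin n) ∈ ({x} : Set (Fin n)) := by
          rw [show ({x} : Set (Fin n)) = A from hxA]
          exact h0A
        rw [Set.mem_singleton_iff, Fin.ext_iff] at this
        have h1 : (0 : ℕ) = (x : ℕ) := this
        have hx' : k ≤ (x : ℕ) := hx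
        omega
    rw [Set.ncard_insert_of_notMem hAQ (Set.toFinite _),
      Set.ncard_insert_of_notMem hBQ (Set.toFinite _), hQcard]

end KFairAux

theorem kFairCoalNum_completeGraph (n k : ℕ) (hk : 2 ≤ k) (hkn : k ≤ n - 1) :
    (SimpleGraph.completeGraph (Fin n)).kFairCoalNum k = n - k + 2 := by
  have hkn' : k + 1 ≤ n := by omega
  obtain ⟨P, hP, hPcard⟩ := KFairAux.construct n k hk hkn'
  unfold SimpleGraph.kFairCoalNum
  apply le_antisymm
  · apply csSup_le
    · exact ⟨n - k + 2, P, hP, hPcard⟩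
    · rintro m ⟨Q, hQ, rfl⟩
      exact KFairAux.upper hk hkn' hQ
  · apply le_csSup
    · refine ⟨n - k + 2, ?_⟩
      rintro m ⟨Q, hQ, rfl⟩
      exact KFairAux.upper hk hkn' hQ
    · exact ⟨P, hP, hPcard⟩
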